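/- One has γ_b → ∞ as b → ∞, and γ_{b+1}/γ_b → 1 as b → ∞. -/

import Mathlib

open MeasureTheory Finset Filter

/-- `lamBK μ b k` is `λ_{b,k} = ∫_{[0,1]} x^{k-2} (1-x)^{b-k} dΛ(x)`. -/
noncomputable def lamBK (μ : Measure ℝ) (b k : ℕ) : ℝ :=
  ∫ x in Set.Icc (0:ℝ) 1, x ^ (k - 2) * (1 - x) ^ (b - k) ∂μ

/-- `lamB μ b` is `λ_b = Σ_{k=2}^b C(b,k) λ_{b,k}`. -/
noncomputable def lamB (μ : Measure ℝ) (b : ℕ) : ℝ :=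
  ∑ k ∈ Finset.Icc 2 b, (b.choose k : ℝ) * lamBK μ b k

/-- `gamB μ b` is `γ_b = Σ_{k=2}^b C(b,k) (k-1) λ_{b,k}`. -/
noncomputable def gamB (μ : Measure ℝ) (b : ℕ) : ℝ :=
  ∑ k ∈ Finset.Icc 2 b, (b.choose k : ℝ) * ((k : ℝ) - 1) * lamBK μ b k


noncomputable def ff (b : ℕ) (x : ℝ) : ℝ :=
  ∑ k ∈ Finset.Icc 2 b, (b.choose k : ℝ) * ((k : ℝ) - 1) * (x ^ (k - 2) * (1 - x) ^ (b - k))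

noncomputable def hh (b : ℕ) (x : ℝ) : ℝ := ∑ j ∈ Finset.range b, (1 - x) ^ j

lemma ff_zero (x : ℝ) : ff 0 x = 0 := by simp [ff]

lemma ff_rec (b : ℕ) (x : ℝ) : ff (b + 1) x = (1 - x) * ff b x + b := by
  rcases Nat.eq_zero_or_pos b with rfl | hb
  · simp [ff]
  have pascal : ∀ k ∈ Finset.Icc 2 (b + 1),
      ((b+1).choose k : ℝ) * ((k : ℝ) - 1) * (x ^ (k - 2) * (1 - x) ^ (b + 1 - k))
      = (b.choose k : ℝ) * ((k : ℝ) - 1) * (x ^ (k - 2) * (1 - x) ^ (b + 1 - k))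
        + (b.choose (k-1) : ℝ) * ((k : ℝ) - 1) * (x ^ (k - 2) * (1 - x) ^ (b + 1 - k)) := by
    intro k hk
    simp only [Finset.mem_Icc] at hk
    obtain ⟨m, rfl⟩ : ∃ m, k = m + 1 := ⟨k - 1, by omega⟩
    rw [Nat.choose_succ_succ]
    simp only [Nat.add_sub_cancel]
    push_cast
    ring
  rw [ff, Finset.sum_congr rfl pascal, Finset.sum_add_distrib]
  congr 1
  · rw [Finset.sum_Icc_succ_top (by omega), Nat.choose_succ_self]
    simp only [Nat.cast_zero, zero_mul]
    rw [add_zero, ff, Finset.mul_sum]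
    apply Finset.sum_congr rfl
    intro k hk
    simp only [Finset.mem_Icc] at hk
    have : b + 1 - k = (b - k) + 1 := by omega
    rw [this, pow_succ]
    ring
  · have hre : Finset.Icc 2 (b+1) = Finset.Ico 2 (b+2) := by rw [← Finset.Ico_add_one_right_eq_Icc]; rfl
    rw [hre, Finset.sum_Ico_eq_sum_range]
    have h2 : b + 2 - 2 = b := by omega
    rw [h2]
    have key : ∀ i ∈ Finset.range b,
        (b.choose (2 + i - 1) : ℝ) * (((2 + i : ℕ) : ℝ) - 1) * (x ^ (2 + i - 2) * (1 - x) ^ (b + 1 - (2 + i)))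
        = (b : ℝ) * (((b-1).choose i : ℝ) * (x ^ i * (1 - x) ^ ((b-1) - i))) := by
      intro i hi
      simp only [Finset.mem_range] at hi
      have e1 : 2 + i - 1 = i + 1 := by omega
      have e2 : 2 + i - 2 = i := by omega
      have e3 : b + 1 - (2 + i) = (b - 1) - i := by omega
      rw [e1, e2, e3]
      have hn := Nat.add_one_mul_choose_eq (b-1) i
      have hb1 : b - 1 + 1 = b := by omega
      rw [hb1] at hn
      have hc : (b : ℝ) * ((b-1).choose i : ℝ) = (b.choose (i+1) : ℝ) * ((i:ℝ)+1) := by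
        exact_mod_cast congrArg (Nat.cast : ℕ → ℝ) hn
      push_cast
      linear_combination (-(x ^ i * (1 - x) ^ (b - 1 - i))) * hc
    rw [Finset.sum_congr rfl key]
    have hsum : ∑ i ∈ Finset.range ((b-1)+1), x ^ i * (1 - x) ^ ((b-1) - i) * (((b-1).choose i : ℝ)) = 1 := by
      rw [← add_pow]; simp
    have hr : Finset.range b = Finset.range ((b-1)+1) := by congr 1; omega
    rw [hr]
    calc ∑ i ∈ Finset.range ((b-1)+1), (b:ℝ) * (((b-1).choose i : ℝ) * (x ^ i * (1 - x) ^ ((b-1) - i)))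
        = (b:ℝ) * ∑ i ∈ Finset.range ((b-1)+1), x ^ i * (1 - x) ^ ((b-1) - i) * (((b-1).choose i : ℝ)) := by
          rw [Finset.mul_sum]; exact Finset.sum_congr rfl fun i _ => by ring
      _ = (b:ℝ) := by rw [hsum, mul_one]

lemma xff (b : ℕ) (x : ℝ) : x * ff b x = b - hh b x := by
  induction b with
  | zero => simp [ff_zero, hh]
  | succ n ih =>
    simp only [hh] at ih ⊢
    rw [ff_rec, geom_sum_succ]
    push_cast
    linear_combination (1-x) * ih

lemma ff_step (b : ℕ) (x : ℝ) : ff (b + 1) x = ff b x + hh b x := by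
  have h1 := ff_rec b x
  have h2 := xff b x
  nlinarith

lemma hh_nonneg {x : ℝ} (hx : x ∈ Set.Icc (0:ℝ) 1) (b : ℕ) : 0 ≤ hh b x :=
  Finset.sum_nonneg fun j _ => pow_nonneg (by linarith [hx.2]) j

lemma hh_one_le {x : ℝ} (hx : x ∈ Set.Icc (0:ℝ) 1) {b : ℕ} (hb : 1 ≤ b) : 1 ≤ hh b x := by
  have := Finset.single_le_sum (f := fun j => (1-x)^j)
    (fun j _ => pow_nonneg (by linarith [hx.2]) j) (Finset.mem_range.2 (by omega : 0 < b))
  simpa [hh] using this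

lemma hh_mono {x : ℝ} (hx : x ∈ Set.Icc (0:ℝ) 1) {a b : ℕ} (hab : a ≤ b) : hh a x ≤ hh b x := by
  unfold hh
  apply Finset.sum_le_sum_of_subset_of_nonneg (Finset.range_subset_range.2 hab)
  exact fun j _ _ => pow_nonneg (by linarith [hx.2]) j

lemma hh_subadd {x : ℝ} (hx : x ∈ Set.Icc (0:ℝ) 1) (a b : ℕ) : hh (a + b) x ≤ hh a x + hh b x := by
  unfold hh
  rw [Finset.sum_range_add]
  have : ∀ i ∈ Finset.range b, (1-x)^(a+i) ≤ (1-x)^i := fun i _ => by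
    rw [pow_add]
    have h0 : (0:ℝ) ≤ 1 - x := by linarith [hx.2]
    have h1 : (1-x)^a ≤ 1 := pow_le_one₀ h0 (by linarith [hx.1])
    nlinarith [pow_nonneg h0 i, pow_nonneg h0 a]
  have := Finset.sum_le_sum this
  linarith

lemma hh_cont (b : ℕ) : Continuous (hh b) := by
  unfold hh; fun_prop

lemma ff_cont (b : ℕ) : Continuous (ff b) := by
  unfold ff; fun_prop

section MeasureLayer

variable (μ : Measure ℝ) [IsFiniteMeasure μ]

noncomputable def dd (b : ℕ) : ℝ := ∫ x in Set.Icc (0:ℝ) 1, hh b x ∂μ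

lemma ff_intble (b : ℕ) : IntegrableOn (ff b) (Set.Icc (0:ℝ) 1) μ :=
  (ff_cont b).integrableOn_Icc

lemma hh_intble (b : ℕ) : IntegrableOn (hh b) (Set.Icc (0:ℝ) 1) μ :=
  (hh_cont b).integrableOn_Icc

lemma gamB_eq (b : ℕ) : gamB μ b = ∫ x in Set.Icc (0:ℝ) 1, ff b x ∂μ := by
  unfold gamB ff lamBK
  rw [integral_finset_sum]
  · apply Finset.sum_congr rfl
    intro k _
    rw [integral_const_mul]
  · intro k _
    exact (by fun_prop : Continuous fun x : ℝ =>
      (b.choose k : ℝ) * ((k : ℝ) - 1) * (x ^ (k - 2) * (1 - x) ^ (b - k))).integrableOn_Icc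

lemma gamB_succ (b : ℕ) : gamB μ (b + 1) = gamB μ b + dd μ b := by
  rw [gamB_eq, gamB_eq, dd]
  have : ∀ x : ℝ, ff (b+1) x = ff b x + hh b x := ff_step b
  rw [show (fun x => ff (b+1) x) = fun x => ff b x + hh b x from funext this]
  exact integral_add (ff_intble μ b) (hh_intble μ b)

lemma gamB_sum (b : ℕ) : gamB μ b = ∑ j ∈ Finset.range b, dd μ j := by
  induction b with
  | zero => simp [gamB]
  | succ n ih => rw [gamB_succ, ih, Finset.sum_range_succ]

lemma dd_nonneg (b : ℕ) : 0 ≤ dd μ b :=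
  setIntegral_nonneg measurableSet_Icc fun x hx => hh_nonneg hx b

lemma dd_mono {a b : ℕ} (hab : a ≤ b) : dd μ a ≤ dd μ b :=
  setIntegral_mono_on (hh_intble μ a) (hh_intble μ b) measurableSet_Icc
    fun x hx => hh_mono hx hab

lemma dd_ge {b : ℕ} (hb : 1 ≤ b) : (μ (Set.Icc (0:ℝ) 1)).toReal ≤ dd μ b := by
  have h1 : ∫ _ in Set.Icc (0:ℝ) 1, (1:ℝ) ∂μ = (μ (Set.Icc (0:ℝ) 1)).toReal := by
    rw [setIntegral_const]; simp [Measure.real]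
  rw [← h1]
  exact setIntegral_mono_on (integrable_const 1).integrableOn (hh_intble μ b)
    measurableSet_Icc fun x hx => hh_one_le hx hb

lemma dd_subadd (a b : ℕ) : dd μ (a + b) ≤ dd μ a + dd μ b := by
  have : dd μ a + dd μ b = ∫ x in Set.Icc (0:ℝ) 1, (hh a x + hh b x) ∂μ :=
    (integral_add (hh_intble μ a) (hh_intble μ b)).symm
  rw [this]
  exact setIntegral_mono_on (hh_intble μ (a+b))
    ((hh_intble μ a).add (hh_intble μ b)) measurableSet_Icc
    fun x hx => hh_subadd hx a b

end MeasureLayer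

theorem gamB_tendsto_atTop_and_ratio_tendsto_one (μ : Measure ℝ) [IsFiniteMeasure μ]
    (h0 : μ {0} = 0) (h1 : μ {1} = 0)
    (hsupp : μ ((Set.Icc (0:ℝ) 1)ᶜ) = 0) (hpos : 0 < μ (Set.Icc (0:ℝ) 1)) :
    Tendsto (fun b : ℕ => gamB μ b) atTop atTop ∧
      Tendsto (fun b : ℕ => gamB μ (b + 1) / gamB μ b) atTop (nhds 1) := by
  set c0 : ℝ := (μ (Set.Icc (0:ℝ) 1)).toReal with hc0def
  have hc0 : 0 < c0 := ENNReal.toReal_pos hpos.ne' (measure_ne_top μ _)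
  -- lower bound for gamB
  have hge : ∀ b : ℕ, ((b:ℝ) - 1) * c0 ≤ gamB μ b := by
    intro b
    rcases Nat.eq_zero_or_pos b with rfl | hb
    · simp only [Nat.cast_zero, gamB_sum, Finset.range_zero, Finset.sum_empty]
      nlinarith
    · rw [gamB_sum]
      have hsub : Finset.Ico 1 b ⊆ Finset.range b := by
        rw [Finset.range_eq_Ico]; exact Finset.Ico_subset_Ico (by omega) le_rfl
      have h2 : ∑ j ∈ Finset.Ico 1 b, dd μ j ≤ ∑ j ∈ Finset.range b, dd μ j :=
        Finset.sum_le_sum_of_subset_of_nonneg hsub fun j _ _ => dd_nonneg μ j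
      have h3 : (Finset.Ico 1 b).card • c0 ≤ ∑ j ∈ Finset.Ico 1 b, dd μ j :=
        Finset.card_nsmul_le_sum _ _ _ fun j hj => dd_ge μ (Finset.mem_Ico.1 hj).1
      rw [Nat.card_Ico] at h3
      have h4 : ((b:ℝ) - 1) * c0 ≤ ((b - 1 : ℕ) : ℝ) * c0 := by
        have : ((b:ℝ) - 1) ≤ ((b - 1 : ℕ) : ℝ) := by
          rw [Nat.cast_sub hb]; simp
        nlinarith
      calc ((b:ℝ) - 1) * c0 ≤ ((b - 1 : ℕ) : ℝ) * c0 := h4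
        _ = (b - 1 : ℕ) • c0 := (nsmul_eq_mul _ _).symm
        _ ≤ ∑ j ∈ Finset.Ico 1 b, dd μ j := h3
        _ ≤ _ := h2
  have hb1tend : Tendsto (fun b : ℕ => (b:ℝ) - 1) atTop atTop := by
    simp only [sub_eq_add_neg]
    exact tendsto_atTop_add_const_right atTop (-1) tendsto_natCast_atTop_atTop
  have htop : Tendsto (fun b : ℕ => gamB μ b) atTop atTop :=
    tendsto_atTop_mono hge (hb1tend.atTop_mul_const hc0)
  refine ⟨htop, ?_⟩
  -- ratio part
  have hGpos : ∀ b : ℕ, 2 ≤ b → 0 < gamB μ b := by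
    intro b hb
    have := hge b
    have : (1:ℝ) ≤ (b:ℝ) - 1 := by
      have : (2:ℝ) ≤ (b:ℝ) := by exact_mod_cast hb
      linarith
    nlinarith [hge b]
  have hkey : ∀ b : ℕ, 3 ≤ b → dd μ b / gamB μ b ≤ 4 / ((b:ℝ) - 1) := by
    intro b hb
    set m := (b + 1) / 2 with hm
    have hm1 : b ≤ 2 * m := by omega
    have hm2 : m ≤ b := by omega
    have hddb : dd μ b ≤ 2 * dd μ m := by
      have := dd_subadd μ m m
      have h2 := dd_mono μ hm1
      rw [show 2 * m = m + m by ring] at h2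
      linarith
    have hGlow : ((b:ℝ) - (m:ℝ)) * dd μ m ≤ gamB μ b := by
      rw [gamB_sum]
      have hsub : Finset.Ico m b ⊆ Finset.range b := by
        rw [Finset.range_eq_Ico]; exact Finset.Ico_subset_Ico (by omega) le_rfl
      have h2 : ∑ j ∈ Finset.Ico m b, dd μ j ≤ ∑ j ∈ Finset.range b, dd μ j :=
        Finset.sum_le_sum_of_subset_of_nonneg hsub fun j _ _ => dd_nonneg μ j
      have h3 : (Finset.Ico m b).card • dd μ m ≤ ∑ j ∈ Finset.Ico m b, dd μ j :=
        Finset.card_nsmul_le_sum _ _ _ fun j hj => dd_mono μ (Finset.mem_Ico.1 hj).1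
      rw [Nat.card_Ico] at h3
      have h4 : ((b:ℝ) - (m:ℝ)) = ((b - m : ℕ) : ℝ) := by
        rw [Nat.cast_sub hm2]
      rw [h4]
      calc ((b - m : ℕ) : ℝ) * dd μ m = (b - m : ℕ) • dd μ m := (nsmul_eq_mul _ _).symm
        _ ≤ ∑ j ∈ Finset.Ico m b, dd μ j := h3
        _ ≤ _ := h2
    have hmle : (m:ℝ) ≤ ((b:ℝ) + 1) / 2 := by
      have : 2 * m ≤ b + 1 := by omega
      have : (2:ℝ) * (m:ℝ) ≤ (b:ℝ) + 1 := by exact_mod_cast this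
      linarith
    have hddm : 0 ≤ dd μ m := dd_nonneg μ m
    have hGlow2 : ((b:ℝ) - 1) / 4 * dd μ b ≤ gamB μ b := by
      have hbm : ((b:ℝ) - 1) / 2 ≤ (b:ℝ) - (m:ℝ) := by linarith
      have : ((b:ℝ) - 1) / 2 * dd μ m ≤ ((b:ℝ) - (m:ℝ)) * dd μ m := by
        apply mul_le_mul_of_nonneg_right hbm hddm
      have hb1 : (0:ℝ) ≤ ((b:ℝ) - 1) / 2 := by
        have : (3:ℝ) ≤ (b:ℝ) := by exact_mod_cast hb
        linarith
      nlinarith [hddb]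
    have hG : 0 < gamB μ b := hGpos b (by omega)
    have hb1pos : (0:ℝ) < (b:ℝ) - 1 := by
      have : (3:ℝ) ≤ (b:ℝ) := by exact_mod_cast hb
      linarith
    rw [div_le_div_iff₀ hG hb1pos]
    nlinarith [hGlow2]
  -- dd/gamB → 0
  have hzero : Tendsto (fun b : ℕ => dd μ b / gamB μ b) atTop (nhds 0) := by
    have hub : Tendsto (fun b : ℕ => 4 / ((b:ℝ) - 1)) atTop (nhds 0) :=
      tendsto_const_nhds.div_atTop hb1tend
    apply tendsto_of_tendsto_of_tendsto_of_le_of_le' tendsto_const_nhds hub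
    · filter_upwards [eventually_ge_atTop 3] with b hb
      exact div_nonneg (dd_nonneg μ b) (hGpos b (by omega)).le
    · filter_upwards [eventually_ge_atTop 3] with b hb
      exact hkey b hb
  have : Tendsto (fun b : ℕ => 1 + dd μ b / gamB μ b) atTop (nhds 1) := by
    have := tendsto_const_nhds (x := (1:ℝ)) (f := atTop (α := ℕ)) |>.add hzero
    simpa using this
  apply this.congr'
  filter_upwards [eventually_ge_atTop 3] with b hb
  have hG : 0 < gamB μ b := hGpos b (by omega)
  rw [gamB_succ]
  field_simp
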